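/- For a (p_r,q_r)-interval I_r and a (p'_s,q'_s)-interval J_s of ℝ² (intervals with finitely many minimal and maximal points), and ε ≥ 0: J_s ⊆ I_r^ε and I_r ⊆ J_s^ε if and only if ε ≥ max(max_k a_k, max_l b_l, max_i a'_i, max_j b'_j), where a_k = min_i max((1-δ(x^r_i, x^s_k))|x^s_k - x^r_i|, (1-δ(y^r_i, y^s_k))|y^s_k - y^r_i|) ranges over the minimal points, b_l = min_j max(δ(X^r_j, X^s_l)|X^s_l - X^r_j|, δ(Y^r_j, Y^s_l)|Y^s_l - Y^r_j|) over the maximal points, and a'_i, b'_j are obtained by swapping the roles of the two intervals. -/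

import Mathlib

/-- The closed `ε`-ball in `ℝ²` around `p` w.r.t. the supremum distance, as an
order interval. -/
def supBall2 (p : ℝ × ℝ) (ε : ℝ) : Set (ℝ × ℝ) :=
  {q | p.1 - ε ≤ q.1 ∧ p.2 - ε ≤ q.2 ∧ q.1 ≤ p.1 + ε ∧ q.2 ≤ p.2 + ε}

/-- The `ε`-thickening of a subset of `ℝ²`. -/
def thick2 (I : Set (ℝ × ℝ)) (ε : ℝ) : Set (ℝ × ℝ) :=
  ⋃ p ∈ I, supBall2 p ε

/-- An interval of the poset `ℝ²`: nonempty, order-convex, connected via chains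
of pairwise-comparable consecutive points. -/
def IsInterval2 (I : Set (ℝ × ℝ)) : Prop :=
  I.Nonempty ∧
  (∀ p ∈ I, ∀ q ∈ I, ∀ r, p ≤ r → r ≤ q → r ∈ I) ∧
  (∀ p ∈ I, ∀ q ∈ I, ∃ (n : ℕ) (c : Fin (n + 1) → ℝ × ℝ),
    c 0 = p ∧ c (Fin.last n) = q ∧ (∀ i, c i ∈ I) ∧
    ∀ i : Fin n, c i.castSucc ≤ c i.succ ∨ c i.succ ≤ c i.castSucc)

/-- `δ(x,y) = 1` if `x ≤ y` and `0` otherwise. -/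
noncomputable def ind (x y : ℝ) : ℝ := if x ≤ y then 1 else 0

/-- The quantity `max((1-δ(x,x'))|x'-x|, (1-δ(y,y'))|y'-y|)` comparing a minimal
point `m` of one interval with a minimal point `m'` of the other. -/
noncomputable def dMinPt (m m' : ℝ × ℝ) : ℝ :=
  max ((1 - ind m.1 m'.1) * |m'.1 - m.1|) ((1 - ind m.2 m'.2) * |m'.2 - m.2|)

/-- The quantity `max(δ(X,X')|X'-X|, δ(Y,Y')|Y'-Y|)` comparing a maximal point
`M` of one interval with a maximal point `M'` of the other. -/
noncomputable def dMaxPt (M M' : ℝ × ℝ) : ℝ :=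
  max (ind M.1 M'.1 * |M'.1 - M.1|) (ind M.2 M'.2 * |M'.2 - M.2|)

/-- Comparability-within-`I` relation: both points lie in `I` and they are
comparable. -/
def Cmp2 (I : Set (ℝ × ℝ)) (a b : ℝ × ℝ) : Prop :=
  a ∈ I ∧ b ∈ I ∧ (a ≤ b ∨ b ≤ a)

/-- A finite chain with comparable consecutive points yields a
`Relation.ReflTransGen` path for the comparability relation. -/
lemma chain_rtg (I : Set (ℝ × ℝ)) :
    ∀ (n : ℕ) (c : Fin (n + 1) → ℝ × ℝ), (∀ i, c i ∈ I) →
    (∀ i : Fin n, c i.castSucc ≤ c i.succ ∨ c i.succ ≤ c i.castSucc) →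
    Relation.ReflTransGen (Cmp2 I) (c 0) (c (Fin.last n)) := by
  intro n
  induction n with
  | zero =>
    intro c _ _
    have : (Fin.last 0) = (0 : Fin 1) := rfl
    rw [this]
  | succ n ih =>
    intro c hmem hcmp
    have h1 : Relation.ReflTransGen (Cmp2 I) (c 0) (c 1) := by
      refine Relation.ReflTransGen.single ⟨hmem 0, hmem 1, ?_⟩
      have h := hcmp 0
      simpa using h
    have h2 := ih (fun i => c i.succ) (fun i => hmem _) (fun i => by
      have h := hcmp i.succ
      simpa only [Fin.succ_castSucc] using h)
    have e1 : c (0 : Fin (n+1)).succ = c 1 := by norm_num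
    have e2 : c (Fin.last n).succ = c (Fin.last (n+1)) := by rw [Fin.succ_last]
    simp only [e1, e2] at h2
    exact h1.trans h2

/-- The workhorse: walking along a comparability path towards a point `q` that
dominates the bottom corner `bl` of a box, starting in a position recorded by
one of two corner invariants, one must meet the box `[bl, bu]`. -/
lemma corner_walk {I : Set (ℝ × ℝ)}
    (hconv : ∀ p ∈ I, ∀ q ∈ I, ∀ r, p ≤ r → r ≤ q → r ∈ I)
    (bl bu : ℝ × ℝ) (hb : bl ≤ bu) (q : ℝ × ℝ) (hlq : bl ≤ q) :
    ∀ (p : ℝ × ℝ), Relation.ReflTransGen (Cmp2 I) p q →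
    ((p.2 < bl.2 ∧ ∃ u ∈ I, u.1 ≤ bu.1 ∧ u.2 ≤ bl.2) ∨
     (p.1 < bl.1 ∧ ∃ u ∈ I, u.1 ≤ bl.1 ∧ u.2 ≤ bu.2)) →
    ∃ z ∈ I, bl ≤ z ∧ z ≤ bu := by
  intro p hrtg
  induction hrtg using Relation.ReflTransGen.head_induction_on with
  | refl =>
    rintro (⟨h2, -⟩ | ⟨h1, -⟩)
    · exact absurd hlq.2 (by linarith)
    · exact absurd hlq.1 (by linarith)
  | head hpc hcq ih =>
    rename_i p c
    obtain ⟨hpI, hcI, hcmp⟩ := hpc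
    rintro (⟨hp2, u, huI, hu1, hu2⟩ | ⟨hp1, u, huI, hu1, hu2⟩)
    · -- INV1: p below the box bottom line, witness u ≤ (bu.1, bl.2)
      by_cases hc2 : c.2 < bl.2
      · exact ih (Or.inl ⟨hc2, u, huI, hu1, hu2⟩)
      · push_neg at hc2
        have hpc' : p ≤ c := by
          rcases hcmp with h | h
          · exact h
          · exact absurd (h.2.trans_lt hp2) (not_lt.mpr hc2)
        by_cases hc1 : bu.1 ≤ c.1
        · exact ⟨(bu.1, bl.2), hconv u huI c hcI _ ⟨hu1, hu2⟩ ⟨hc1, hc2⟩,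
            ⟨hb.1, le_refl _⟩, ⟨le_refl _, hb.2⟩⟩
        · push_neg at hc1
          by_cases hcb : c.1 < bl.1
          · refine ih (Or.inr ⟨hcb, (c.1, p.2),
              hconv p hpI c hcI _ ⟨hpc'.1, le_refl _⟩ ⟨le_refl _, hpc'.2⟩,
              hcb.le, hp2.le.trans hb.2⟩)
          · push_neg at hcb
            by_cases hct : c.2 ≤ bu.2
            · exact ⟨c, hcI, ⟨hcb, hc2⟩, ⟨hc1.le, hct⟩⟩
            · push_neg at hct
              exact ⟨(c.1, bl.2), hconv p hpI c hcI _ ⟨hpc'.1, hp2.le⟩ ⟨le_refl _, hc2⟩,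
                ⟨hcb, le_refl _⟩, ⟨hc1.le, hb.2⟩⟩
    · -- INV2: symmetric
      by_cases hc1 : c.1 < bl.1
      · exact ih (Or.inr ⟨hc1, u, huI, hu1, hu2⟩)
      · push_neg at hc1
        have hpc' : p ≤ c := by
          rcases hcmp with h | h
          · exact h
          · exact absurd (h.1.trans_lt hp1) (not_lt.mpr hc1)
        by_cases hc2 : bu.2 ≤ c.2
        · exact ⟨(bl.1, bu.2), hconv u huI c hcI _ ⟨hu1, hu2⟩ ⟨hc1, hc2⟩,
            ⟨le_refl _, hb.2⟩, ⟨hb.1, le_refl _⟩⟩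
        · push_neg at hc2
          by_cases hcb : c.2 < bl.2
          · refine ih (Or.inl ⟨hcb, (p.1, c.2),
              hconv p hpI c hcI _ ⟨le_refl _, hpc'.2⟩ ⟨hpc'.1, le_refl _⟩,
              hp1.le.trans hb.1, hcb.le⟩)
          · push_neg at hcb
            by_cases hct : c.1 ≤ bu.1
            · exact ⟨c, hcI, ⟨hc1, hcb⟩, ⟨hct, hc2.le⟩⟩
            · push_neg at hct
              exact ⟨(bl.1, c.2), hconv p hpI c hcI _ ⟨hp1.le, hpc'.2⟩ ⟨hc1, le_refl _⟩,
                ⟨le_refl _, hcb⟩, ⟨hb.1, hc2.le⟩⟩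

/-- An interval meets every box `[bl, bu]` that contains a point of the
interval in its lower set and a point in its upper set. -/
lemma interval_meets_box {I : Set (ℝ × ℝ)} (hIint : IsInterval2 I)
    (bl bu p q : ℝ × ℝ) (hb : bl ≤ bu) (hp : p ∈ I) (hq : q ∈ I)
    (hpu : p ≤ bu) (hlq : bl ≤ q) :
    ∃ z ∈ I, bl ≤ z ∧ z ≤ bu := by
  by_cases hbp : bl ≤ p
  · exact ⟨p, hp, hbp, hpu⟩
  · obtain ⟨n, c, h0, hl, hmem, hcmp⟩ := hIint.2.2 p hp q hq
    have hrtg : Relation.ReflTransGen (Cmp2 I) p q := by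
      have := chain_rtg I n c hmem hcmp
      rwa [h0, hl] at this
    refine corner_walk hIint.2.1 bl bu hb q hlq p hrtg ?_
    rw [Prod.le_def, not_and_or, not_le, not_le] at hbp
    rcases hbp with h | h
    · exact Or.inr ⟨h, p, hp, h.le, hpu.2⟩
    · exact Or.inl ⟨h, p, hp, hpu.1, h.le⟩

lemma mem_thick2 {I : Set (ℝ × ℝ)} {ε : ℝ} {w : ℝ × ℝ} :
    w ∈ thick2 I ε ↔
      ∃ p ∈ I, p.1 - ε ≤ w.1 ∧ p.2 - ε ≤ w.2 ∧ w.1 ≤ p.1 + ε ∧ w.2 ≤ p.2 + ε := by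
  constructor
  · intro h
    simp only [thick2, supBall2, Set.mem_iUnion, Set.mem_setOf_eq] at h
    obtain ⟨p, hp, h1, h2, h3, h4⟩ := h
    exact ⟨p, hp, h1, h2, h3, h4⟩
  · rintro ⟨p, hp, h1, h2, h3, h4⟩
    simp only [thick2, supBall2, Set.mem_iUnion, Set.mem_setOf_eq]
    exact ⟨p, hp, h1, h2, h3, h4⟩

/-- Characterization of `J ⊆ thick2 I ε` via min/max points. -/
lemma subset_thick_iff
    (minI maxI minJ maxJ : Finset (ℝ × ℝ)) {I J : Set (ℝ × ℝ)}
    (hIint : IsInterval2 I)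
    (hIreg : I = {p | ∃ m ∈ minI, ∃ M ∈ maxI, m ≤ p ∧ p ≤ M})
    (hJreg : J = {p | ∃ m ∈ minJ, ∃ M ∈ maxJ, m ≤ p ∧ p ≤ M})
    (hmJsub : ∀ k ∈ minJ, k ∈ J) (hMJsub : ∀ l ∈ maxJ, l ∈ J)
    (hmIsub : ∀ i ∈ minI, i ∈ I) (hMIsub : ∀ j ∈ maxI, j ∈ I)
    {ε : ℝ} (hε : 0 ≤ ε) :
    J ⊆ thick2 I ε ↔
      ((∀ k ∈ minJ, ∃ i ∈ minI, i.1 - ε ≤ k.1 ∧ i.2 - ε ≤ k.2) ∧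
       (∀ l ∈ maxJ, ∃ j ∈ maxI, l.1 ≤ j.1 + ε ∧ l.2 ≤ j.2 + ε)) := by
  constructor
  · intro hsub
    constructor
    · intro k hk
      obtain ⟨p, hpI, h1, h2, -, -⟩ := mem_thick2.mp (hsub (hmJsub k hk))
      have hpI' := hpI
      rw [hIreg] at hpI'
      obtain ⟨m, hm, M, hM, hmp, hpM⟩ := hpI'
      exact ⟨m, hm, by linarith [hmp.1], by linarith [hmp.2]⟩
    · intro l hl
      obtain ⟨p, hpI, -, -, h3, h4⟩ := mem_thick2.mp (hsub (hMJsub l hl))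
      have hpI' := hpI
      rw [hIreg] at hpI'
      obtain ⟨m, hm, M, hM, hmp, hpM⟩ := hpI'
      exact ⟨M, hM, by linarith [hpM.1], by linarith [hpM.2]⟩
  · rintro ⟨hmin, hmax⟩ w hw
    rw [hJreg] at hw
    obtain ⟨k, hk, l, hl, hkw, hwl⟩ := hw
    obtain ⟨i, hi, hi1, hi2⟩ := hmin k hk
    obtain ⟨j, hj, hj1, hj2⟩ := hmax l hl
    obtain ⟨z, hzI, hz1, hz2⟩ := interval_meets_box hIint
      (w.1 - ε, w.2 - ε) (w.1 + ε, w.2 + ε) i j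
      (⟨by simp; linarith, by simp; linarith⟩)
      (hmIsub i hi) (hMIsub j hj)
      ⟨by simp; linarith [hkw.1], by simp; linarith [hkw.2]⟩
      ⟨by simp; linarith [hwl.1], by simp; linarith [hwl.2]⟩
    refine mem_thick2.mpr ⟨z, hzI, ?_, ?_, ?_, ?_⟩
    · have := hz2.1; simp at this; linarith
    · have := hz2.2; simp at this; linarith
    · have := hz1.1; simp at this; linarith
    · have := hz1.2; simp at this; linarith

lemma dMinPt_le_iff {ε : ℝ} (hε : 0 ≤ ε) (m m' : ℝ × ℝ) :
    dMinPt m m' ≤ ε ↔ m.1 - ε ≤ m'.1 ∧ m.2 - ε ≤ m'.2 := by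
  have key : ∀ x x' : ℝ, ((1 - ind x x') * |x' - x| ≤ ε ↔ x - ε ≤ x') := by
    intro x x'
    unfold ind
    split_ifs with h
    · simp only [sub_self, zero_mul]
      exact iff_of_true hε (by linarith)
    · push_neg at h
      rw [sub_zero, one_mul, abs_of_neg (by linarith)]
      constructor <;> intro <;> linarith
  rw [dMinPt, max_le_iff, key, key]

lemma dMaxPt_le_iff {ε : ℝ} (hε : 0 ≤ ε) (M M' : ℝ × ℝ) :
    dMaxPt M M' ≤ ε ↔ M'.1 ≤ M.1 + ε ∧ M'.2 ≤ M.2 + ε := by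
  have key : ∀ x x' : ℝ, (ind x x' * |x' - x| ≤ ε ↔ x' ≤ x + ε) := by
    intro x x'
    unfold ind
    split_ifs with h
    · rw [one_mul, abs_of_nonneg (by linarith)]
      constructor <;> intro <;> linarith
    · push_neg at h
      simp only [zero_mul]
      exact iff_of_true hε (by linarith)
  rw [dMaxPt, max_le_iff, key, key]

/-- For a `(p_r,q_r)`-interval `I` and a `(p'_s,q'_s)`-interval `J` of `ℝ²`
(the closed regions determined by their finitely many minimal and maximal
points) and `ε ≥ 0`: `J ⊆ I^ε` and `I ⊆ J^ε` hold iff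
`ε ≥ max(max_k a_k, max_l b_l, max_i a'_i, max_j b'_j)`. -/
theorem containment_iff_eps_ge (minI maxI minJ maxJ : Finset (ℝ × ℝ))
    (hmI : minI.Nonempty) (hMI : maxI.Nonempty)
    (hmJ : minJ.Nonempty) (hMJ : maxJ.Nonempty)
    (I J : Set (ℝ × ℝ))
    (hIint : IsInterval2 I) (hJint : IsInterval2 J)
    (hIreg : I = {p | ∃ m ∈ minI, ∃ M ∈ maxI, m ≤ p ∧ p ≤ M})
    (hJreg : J = {p | ∃ m ∈ minJ, ∃ M ∈ maxJ, m ≤ p ∧ p ≤ M})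
    (hminI : ↑minI = {p ∈ I | ∀ q ∈ I, q ≤ p → q = p})
    (hmaxI : ↑maxI = {p ∈ I | ∀ q ∈ I, p ≤ q → q = p})
    (hminJ : ↑minJ = {p ∈ J | ∀ q ∈ J, q ≤ p → q = p})
    (hmaxJ : ↑maxJ = {p ∈ J | ∀ q ∈ J, p ≤ q → q = p})
    (ε : ℝ) (hε : 0 ≤ ε) :
    (J ⊆ thick2 I ε ∧ I ⊆ thick2 J ε) ↔
      max
        (max (minJ.sup' hmJ fun k => minI.inf' hmI fun i => dMinPt i k)
             (maxJ.sup' hMJ fun l => maxI.inf' hMI fun j => dMaxPt j l))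
        (max (minI.sup' hmI fun i => minJ.inf' hmJ fun k => dMinPt k i)
             (maxI.sup' hMI fun j => maxJ.inf' hMJ fun l => dMaxPt l j)) ≤ ε := by
  have hmIsub : ∀ i ∈ minI, i ∈ I := fun i hi => by
    have h : i ∈ (↑minI : Set (ℝ × ℝ)) := hi
    rw [hminI] at h; exact h.1
  have hMIsub : ∀ j ∈ maxI, j ∈ I := fun j hj => by
    have h : j ∈ (↑maxI : Set (ℝ × ℝ)) := hj
    rw [hmaxI] at h; exact h.1
  have hmJsub : ∀ k ∈ minJ, k ∈ J := fun k hk => by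
    have h : k ∈ (↑minJ : Set (ℝ × ℝ)) := hk
    rw [hminJ] at h; exact h.1
  have hMJsub : ∀ l ∈ maxJ, l ∈ J := fun l hl => by
    have h : l ∈ (↑maxJ : Set (ℝ × ℝ)) := hl
    rw [hmaxJ] at h; exact h.1
  rw [subset_thick_iff minI maxI minJ maxJ hIint hIreg hJreg hmJsub hMJsub hmIsub hMIsub hε,
      subset_thick_iff minJ maxJ minI maxI hJint hJreg hIreg hmIsub hMIsub hmJsub hMJsub hε]
  simp only [max_le_iff, Finset.sup'_le_iff, Finset.inf'_le_iff, dMinPt_le_iff hε,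
    dMaxPt_le_iff hε]
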